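/- arXiv:2203.02375 — 3 statements merged into one kernel-verified Lean document; each statement's English description precedes it below -/
import Mathlib

section
/- Fix d ≥ 1 and C₀ > 0, and let GL⁺(d) := {F ∈ ℝ^{d×d} : det F > 0}. Let W^cpl : GL⁺(d) × [0,∞) → ℝ be such that for every F ∈ GL⁺(d) and θ ≥ 0 the map W^cpl(·,θ) is differentiable at F with Frobenius gradient ∂_F W^cpl(F,θ) ∈ ℝ^{d×d}, and suppose: (i) for each F ∈ GL⁺(d), the map θ ↦ ∂_F W^cpl(F,θ) is continuous on [0,∞) with ∂_F W^cpl(F,0) = 0 and is differentiable on (0,∞) with |∂_θ ∂_F W^cpl(F,θ)| ≤ C₀(1+|F|)/max{θ,1} for all θ > 0; (ii) |W^cpl(F,θ) − W^cpl(F̃,θ)| ≤ C₀(1+|F|+|F̃|)|F−F̃| for all F, F̃ ∈ GL⁺(d) and θ ≥ 0. Then |∂_F W^cpl(F,θ)| ≤ 2C₀ · min{θ,1} · (1+|F|) for all F ∈ GL⁺(d) and θ ≥ 0. -/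
open Matrix Set

attribute [local instance] Matrix.normedAddCommGroup Matrix.normedSpace

/-- Frobenius inner product `⟨A,B⟩ = trace(AᵀB) = ∑ᵢⱼ Aᵢⱼ Bᵢⱼ`. -/
def minner {d : ℕ} (A B : Matrix (Fin d) (Fin d) ℝ) : ℝ := ∑ i, ∑ j, A i j * B i j

/-- Frobenius norm. -/
noncomputable def frobNorm {d : ℕ} (A : Matrix (Fin d) (Fin d) ℝ) : ℝ :=
  Real.sqrt (minner A A)

noncomputable def toE (d : ℕ) : Matrix (Fin d) (Fin d) ℝ →L[ℝ] EuclideanSpace ℝ (Fin d × Fin d) :=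
  LinearMap.toContinuousLinearMap
    { toFun := fun A => WithLp.toLp 2 (fun p : Fin d × Fin d => A p.1 p.2)
      map_add' := fun A B => rfl
      map_smul' := fun c A => rfl }

lemma toE_apply {d : ℕ} (A : Matrix (Fin d) (Fin d) ℝ) (p : Fin d × Fin d) :
    toE d A p = A p.1 p.2 := rfl

lemma frob_eq {d : ℕ} (A : Matrix (Fin d) (Fin d) ℝ) : frobNorm A = ‖toE d A‖ := by
  rw [EuclideanSpace.norm_eq, frobNorm, minner]
  congr 1
  rw [Fintype.sum_prod_type]
  refine Finset.sum_congr rfl fun i _ => Finset.sum_congr rfl fun j _ => ?_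
  rw [toE_apply, Real.norm_eq_abs, sq_abs, sq]

lemma frob_nonneg {d : ℕ} (A : Matrix (Fin d) (Fin d) ℝ) : 0 ≤ frobNorm A :=
  Real.sqrt_nonneg _

lemma minner_self {d : ℕ} (A : Matrix (Fin d) (Fin d) ℝ) : minner A A = frobNorm A ^ 2 := by
  rw [frobNorm, Real.sq_sqrt]
  · exact Finset.sum_nonneg fun i _ => Finset.sum_nonneg fun j _ => mul_self_nonneg _

lemma frob_smul {d : ℕ} (t : ℝ) (A : Matrix (Fin d) (Fin d) ℝ) :
    frobNorm (t • A) = |t| * frobNorm A := by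
  rw [frob_eq, frob_eq, _root_.map_smul, norm_smul, Real.norm_eq_abs]

/-- Estimate on the coupling potential: `|∂_F W^cpl(F,θ)| ≤ 2C₀ (θ ∧ 1)(1 + |F|)`. -/
theorem coupling_stress_bound {d : ℕ} (hd : 1 ≤ d) (C₀ : ℝ) (hC₀ : 0 < C₀)
    (Wcpl : Matrix (Fin d) (Fin d) ℝ → ℝ → ℝ)
    -- `g F θ = ∂_F W^cpl(F, θ)`, the Frobenius gradient of `W^cpl(·,θ)` at `F`
    (g : Matrix (Fin d) (Fin d) ℝ → ℝ → Matrix (Fin d) (Fin d) ℝ)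
    (hgrad : ∀ F θ, 0 < F.det → 0 ≤ θ →
      DifferentiableAt ℝ (fun F' => Wcpl F' θ) F ∧
      ∀ H, fderiv ℝ (fun F' => Wcpl F' θ) F H = minner (g F θ) H)
    -- (i) continuity in `θ` on `[0,∞)`, value `0` at `θ = 0`, and the derivative bound
    (hcont : ∀ F, 0 < F.det → ContinuousOn (fun θ => g F θ) (Ici (0 : ℝ)))
    (hzero : ∀ F, 0 < F.det → g F 0 = 0)
    (hderiv : ∀ F, 0 < F.det → ∀ θ : ℝ, 0 < θ →
      ∃ g' : Matrix (Fin d) (Fin d) ℝ,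
        HasDerivAt (fun s => g F s) g' θ ∧
        frobNorm g' ≤ C₀ * (1 + frobNorm F) / max θ 1)
    -- (ii) the Lipschitz-type estimate on `W^cpl`
    (hlip : ∀ F F' : Matrix (Fin d) (Fin d) ℝ, 0 < F.det → 0 < F'.det →
      ∀ θ : ℝ, 0 ≤ θ →
      |Wcpl F θ - Wcpl F' θ| ≤ C₀ * (1 + frobNorm F + frobNorm F') * frobNorm (F - F')) :
    ∀ F θ, 0 < F.det → 0 ≤ θ →
      frobNorm (g F θ) ≤ 2 * C₀ * min θ 1 * (1 + frobNorm F) := by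
  intro F θ hF hθ
  set M := frobNorm F with hMdef
  have hM0 : 0 ≤ M := frob_nonneg F
  -- Claim 1: frobNorm (g F θ) ≤ C₀ * (1 + M) * θ
  have claim1 : frobNorm (g F θ) ≤ C₀ * (1 + M) * θ := by
    rcases eq_or_lt_of_le hθ with h0 | hθpos
    · rw [← h0, hzero F hF]
      simp [frobNorm, minner]
    · -- θ > 0
      classical
      set D : ℝ → Matrix (Fin d) (Fin d) ℝ :=
        fun s => if h : 0 < s then (hderiv F hF s h).choose else 0 with hDdef
      have hD1 : ∀ s, 0 < s → HasDerivAt (fun u => g F u) (D s) s := by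
        intro s hs
        simp only [hDdef, dif_pos hs]
        exact (hderiv F hF s hs).choose_spec.1
      have hD2 : ∀ s, 0 < s → ‖toE d (D s)‖ ≤ C₀ * (1 + M) := by
        intro s hs
        rw [← frob_eq]
        simp only [hDdef, dif_pos hs]
        refine le_trans (hderiv F hF s hs).choose_spec.2 ?_
        exact div_le_self (by positivity) (le_max_right s 1)
      set f : ℝ → EuclideanSpace ℝ (Fin d × Fin d) := fun s => toE d (g F s) with hfdef
      have key : ∀ ε ∈ Ioo (0:ℝ) θ, ‖f θ - f ε‖ ≤ C₀ * (1 + M) * θ := by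
        intro ε hε
        have hmvt := Convex.norm_image_sub_le_of_norm_hasDerivWithin_le
          (f := f) (f' := fun s => toE d (D s)) (C := C₀ * (1 + M)) (s := Icc ε θ)
          (fun x hx => ((toE d).hasFDerivAt.comp_hasDerivAt x
            (hD1 x (lt_of_lt_of_le hε.1 hx.1))).hasDerivWithinAt)
          (fun x hx => hD2 x (lt_of_lt_of_le hε.1 hx.1))
          (convex_Icc ε θ) (left_mem_Icc.2 hε.2.le) (right_mem_Icc.2 hε.2.le)
        refine le_trans hmvt ?_
        rw [Real.norm_eq_abs, abs_of_nonneg (by linarith [hε.1, hε.2] : (0:ℝ) ≤ θ - ε)]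
        have : (0:ℝ) < C₀ * (1 + M) := by positivity
        nlinarith [hε.1, hε.2]
      have hc0 : Filter.Tendsto (fun ε => ‖f θ - f ε‖) (nhdsWithin 0 (Ioi 0))
          (nhds ‖f θ - f 0‖) := by
        have h1 : Filter.Tendsto (fun ε => g F ε) (nhdsWithin 0 (Ioi 0)) (nhds (g F 0)) :=
          ((hcont F hF) 0 self_mem_Ici).mono_left (nhdsWithin_mono 0 Ioi_subset_Ici_self)
        exact (Filter.Tendsto.sub tendsto_const_nhds
          (((toE d).continuous.tendsto _).comp h1)).norm
      have hfin : ‖f θ - f 0‖ ≤ C₀ * (1 + M) * θ := by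
        refine le_of_tendsto hc0 ?_
        filter_upwards [Ioo_mem_nhdsGT_of_mem (by constructor <;> [exact le_refl 0; exact hθpos] :
          (0:ℝ) ∈ Ico 0 θ)] with ε hε
        exact key ε hε
      have hf0 : f 0 = 0 := by
        simp [hfdef, hzero F hF]
      rw [hf0, sub_zero] at hfin
      rw [frob_eq]
      exact hfin
  -- Claim 2: frobNorm (g F θ) ≤ C₀ * (1 + 2*M)
  have claim2 : frobNorm (g F θ) ≤ C₀ * (1 + 2*M) := by
    set G := g F θ with hGdef
    set N := frobNorm G with hNdef
    have hN0 : 0 ≤ N := frob_nonneg G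
    rcases eq_or_lt_of_le hN0 with hN | hNpos
    · rw [← hN]; positivity
    · -- path derivative
      have path : HasDerivAt (fun t : ℝ => F + t • G) G 0 := by
        have h := ((hasDerivAt_id (0:ℝ)).smul_const G).const_add F
        rwa [one_smul] at h
      have hf0 : F + (0:ℝ) • G = F := by simp
      have hW : HasFDerivAt (fun F' => Wcpl F' θ)
          (fderiv ℝ (fun F' => Wcpl F' θ) F) (F + (0:ℝ) • G) := by
        rw [hf0]
        exact (hgrad F θ hF hθ).1.hasFDerivAt
      have φd : HasDerivAt (fun t : ℝ => Wcpl (F + t • G) θ)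
          (fderiv ℝ (fun F' => Wcpl F' θ) F G) 0 := by
            have h := hW.comp_hasDerivAt 0 path
            exact h
      have hval : fderiv ℝ (fun F' => Wcpl F' θ) F G = N ^ 2 := by
        rw [(hgrad F θ hF hθ).2 G, hGdef, minner_self]
      rw [hval] at φd
      -- slope tendsto
      have hslope : Filter.Tendsto (fun t => |slope (fun t : ℝ => Wcpl (F + t • G) θ) 0 t|)
          (nhdsWithin 0 (Ioi 0)) (nhds (N ^ 2)) := by
        have := (hasDerivAt_iff_tendsto_slope.mp φd).mono_left
          (nhdsWithin_mono 0 (fun t (ht : t ∈ Ioi (0:ℝ)) => ne_of_gt ht))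
        simpa [abs_of_nonneg (sq_nonneg N)] using this.abs
      -- RHS tendsto
      have hrhs : Filter.Tendsto (fun t : ℝ => C₀ * (1 + frobNorm (F + t • G) + M) * N)
          (nhdsWithin 0 (Ioi 0)) (nhds (C₀ * (1 + M + M) * N)) := by
        have hcpath : Continuous (fun t : ℝ => F + t • G) :=
          continuous_const.add (continuous_id.smul continuous_const)
        have hc : Continuous (fun t : ℝ => C₀ * (1 + ‖toE d (F + t • G)‖ + M) * N) :=
          ((continuous_const.mul ((continuous_const.add
            (((toE d).continuous.comp hcpath).norm)).add continuous_const)).mul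
            continuous_const)
        have h2 : Filter.Tendsto (fun t : ℝ => C₀ * (1 + ‖toE d (F + t • G)‖ + M) * N)
            (nhdsWithin 0 (Ioi 0)) (nhds (C₀ * (1 + ‖toE d (F + (0:ℝ) • G)‖ + M) * N)) :=
          (hc.tendsto 0).mono_left nhdsWithin_le_nhds
        simp only [frob_eq]
        simpa [hf0, ← frob_eq, hMdef] using h2
      -- eventual inequality
      have hdetc : Continuous (fun t : ℝ => (F + t • G).det) :=
        (continuous_const.add (continuous_id.smul continuous_const)).matrix_det
      have hdetev : ∀ᶠ t : ℝ in nhdsWithin 0 (Ioi 0), 0 < (F + t • G).det := by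
        have h0F : 0 < (F + (0:ℝ) • G).det := by rw [hf0]; exact hF
        exact ((hdetc.tendsto 0).eventually (eventually_gt_nhds h0F)).filter_mono
          nhdsWithin_le_nhds
      have hev : ∀ᶠ t : ℝ in nhdsWithin 0 (Ioi 0),
          |slope (fun t : ℝ => Wcpl (F + t • G) θ) 0 t|
            ≤ C₀ * (1 + frobNorm (F + t • G) + M) * N := by
        filter_upwards [hdetev, self_mem_nhdsWithin] with t hdet (ht : t ∈ Ioi (0:ℝ))
        have ht0 : (0:ℝ) < t := ht
        have hl := hlip (F + t • G) F hdet hF θ hθ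
        have hsub : F + t • G - F = t • G := by abel
        rw [hsub, frob_smul, abs_of_pos ht0] at hl
        rw [slope_def_field, sub_zero, hf0, abs_div, abs_of_pos ht0, div_le_iff₀ ht0]
        calc |Wcpl (F + t • G) θ - Wcpl F θ|
            ≤ C₀ * (1 + frobNorm (F + t • G) + M) * (t * N) := hl
          _ = C₀ * (1 + frobNorm (F + t • G) + M) * N * t := by ring
      have hle : N ^ 2 ≤ C₀ * (1 + M + M) * N :=
        le_of_tendsto_of_tendsto hslope hrhs hev
      have : N ≤ C₀ * (1 + M + M) := by
        have := (mul_le_mul_iff_left₀ hNpos).mp (by nlinarith : N * N ≤ C₀ * (1 + M + M) * N)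
        exact this
      linarith
  -- combine
  rcases le_total θ 1 with h1 | h1
  · rw [min_eq_left h1]
    nlinarith [mul_nonneg (mul_nonneg hC₀.le hθ) (by linarith : (0:ℝ) ≤ 1 + M)]
  · rw [min_eq_right h1]
    nlinarith [claim2, hC₀.le, hM0]
end

section
/- Let 0 < c₀ ≤ C₀ and let g : [0,∞) → ℝ be continuous with g(0) = 0 and twice differentiable on (0,∞) with c₀ ≤ −θ·g''(θ) ≤ C₀ for all θ > 0. Define h(θ) := g(θ) − θ·g'(θ) for θ > 0. Then lim_{θ→0⁺} θ·g'(θ) = 0, h extends continuously to θ = 0 with h(0) = 0, and c₀·θ ≤ h(θ) ≤ C₀·θ for all θ ≥ 0. -/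
open Set Filter Topology

/-- Properties of the internal energy `h(θ) = g(θ) − θ g'(θ)` for a coupling potential `g`
with heat capacity bounds `c₀ ≤ −θ g''(θ) ≤ C₀`:  `θ g'(θ) → 0` as `θ → 0⁺`, `h` extends
continuously to `θ = 0` with value `0`, and `c₀ θ ≤ h(θ) ≤ C₀ θ` for all `θ ≥ 0`. -/
theorem internal_energy_bounds (c₀ C₀ : ℝ) (hc₀ : 0 < c₀) (hcC : c₀ ≤ C₀)
    (g g' g'' : ℝ → ℝ)
    (hgcont : ContinuousOn g (Ici (0 : ℝ)))
    (hg0 : g 0 = 0)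
    (hderiv1 : ∀ θ : ℝ, 0 < θ → HasDerivAt g (g' θ) θ)
    (hderiv2 : ∀ θ : ℝ, 0 < θ → HasDerivAt g' (g'' θ) θ)
    (hbound : ∀ θ : ℝ, 0 < θ → c₀ ≤ -θ * g'' θ ∧ -θ * g'' θ ≤ C₀) :
    Tendsto (fun θ => θ * g' θ) (𝓝[>] (0 : ℝ)) (𝓝 0) ∧
    ∃ h : ℝ → ℝ,
      (∀ θ : ℝ, 0 < θ → h θ = g θ - θ * g' θ) ∧
      h 0 = 0 ∧
      ContinuousWithinAt h (Ici (0 : ℝ)) 0 ∧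
      ∀ θ : ℝ, 0 ≤ θ → c₀ * θ ≤ h θ ∧ h θ ≤ C₀ * θ := by
  have hC₀ : 0 < C₀ := lt_of_lt_of_le hc₀ hcC
  set H : ℝ → ℝ := fun θ => g θ - θ * g' θ with hHdef
  -- derivative of H
  have hHd : ∀ θ : ℝ, 0 < θ → HasDerivAt H (-θ * g'' θ) θ := by
    intro θ hθ
    have h1 : HasDerivAt (fun x : ℝ => x * g' x) (1 * g' θ + θ * g'' θ) θ :=
      (hasDerivAt_id θ).mul (hderiv2 θ hθ)
    have h2 := (hderiv1 θ hθ).sub h1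
    exact h2.congr_deriv (by ring)
  -- key two-sided increment bound
  have key : ∀ a b : ℝ, 0 < a → a ≤ b →
      c₀ * (b - a) ≤ H b - H a ∧ H b - H a ≤ C₀ * (b - a) := by
    have hIoi : interior (Ioi (0 : ℝ)) = Ioi 0 := interior_Ioi
    have hHcont : ContinuousOn H (Ioi (0 : ℝ)) := fun x hx =>
      ((hHd x hx).continuousAt).continuousWithinAt
    have hd1 : ∀ x : ℝ, 0 < x → HasDerivAt (fun θ => H θ - c₀ * θ) (-x * g'' x - c₀) x := by
      intro x hx
      have := (hHd x hx).sub ((hasDerivAt_id x).const_mul c₀)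
      exact this.congr_deriv (by simp)
    have hd2 : ∀ x : ℝ, 0 < x → HasDerivAt (fun θ => C₀ * θ - H θ) (C₀ - -x * g'' x) x := by
      intro x hx
      have := ((hasDerivAt_id x).const_mul C₀).sub (hHd x hx)
      exact this.congr_deriv (by simp)
    have hmono1 : MonotoneOn (fun θ => H θ - c₀ * θ) (Ioi (0 : ℝ)) := by
      apply monotoneOn_of_hasDerivWithinAt_nonneg (f' := fun θ => -θ * g'' θ - c₀)
        (convex_Ioi 0)
      · exact fun x hx => (hd1 x hx).continuousAt.continuousWithinAt
      · intro x hx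
        rw [hIoi] at hx ⊢
        exact (hd1 x hx).hasDerivWithinAt
      · intro x hx
        rw [hIoi] at hx
        have := (hbound x hx).1
        linarith
    have hmono2 : MonotoneOn (fun θ => C₀ * θ - H θ) (Ioi (0 : ℝ)) := by
      apply monotoneOn_of_hasDerivWithinAt_nonneg (f' := fun θ => C₀ - -θ * g'' θ)
        (convex_Ioi 0)
      · exact fun x hx => (hd2 x hx).continuousAt.continuousWithinAt
      · intro x hx
        rw [hIoi] at hx ⊢
        exact (hd2 x hx).hasDerivWithinAt
      · intro x hx
        rw [hIoi] at hx
        have := (hbound x hx).2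
        linarith
    intro a b ha hab
    have hb : (0 : ℝ) < b := lt_of_lt_of_le ha hab
    have h1 := hmono1 (mem_Ioi.2 ha) (mem_Ioi.2 hb) hab
    have h2 := hmono2 (mem_Ioi.2 ha) (mem_Ioi.2 hb) hab
    simp only at h1 h2
    constructor <;> linarith
  -- monotonicity of H on (0,1) and bounded below
  have hmonoH : MonotoneOn H (Ioo (0 : ℝ) 1) := by
    intro a ha b hb hab
    have := (key a b ha.1 hab).1
    nlinarith
  have hbdd : BddBelow (H '' Ioo (0 : ℝ) 1) := by
    refine ⟨H 1 - C₀, ?_⟩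
    rintro y ⟨a, ha, rfl⟩
    have h2 := (key a 1 ha.1 ha.2.le).2
    have : C₀ * (1 - a) ≤ C₀ := by nlinarith [ha.1]
    linarith
  set L : ℝ := sInf (H '' Ioo (0 : ℝ) 1) with hLdef
  have hlimH : Tendsto H (𝓝[>] (0 : ℝ)) (𝓝 L) :=
    MonotoneOn.tendsto_nhdsWithin_Ioo_right ⟨1 / 2, by norm_num⟩ hmonoH hbdd
  -- g tends to 0 from the right
  have hglim : Tendsto g (𝓝[>] (0 : ℝ)) (𝓝 0) := by
    have := (hgcont 0 (self_mem_Ici)).tendsto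
    rw [hg0] at this
    exact this.mono_left (nhdsWithin_mono _ Ioi_subset_Ici_self)
  -- θ g'(θ) → -L
  have hg'lim : Tendsto (fun θ => θ * g' θ) (𝓝[>] (0 : ℝ)) (𝓝 (0 - L)) := by
    have := hglim.sub hlimH
    refine this.congr fun θ => ?_
    simp [hHdef]
  -- L = 0
  have hL0 : L = 0 := by
    by_contra hL
    -- general contradiction machinery: F θ = g θ + (L/2) log θ
    rcases lt_or_gt_of_ne hL with hLneg | hLpos
    · -- L < 0 : θ g'(θ) → -L > 0, so eventually θ g'(θ) ≥ -L/2 > 0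
      have hev : ∀ᶠ θ in 𝓝[>] (0 : ℝ), -L / 2 < θ * g' θ := by
        apply hg'lim.eventually (eventually_gt_nhds (by linarith))
      rw [eventually_nhdsWithin_iff] at hev
      obtain ⟨δ, hδpos, hδ⟩ := Metric.eventually_nhds_iff.1 hev
      set F : ℝ → ℝ := fun θ => g θ + L / 2 * Real.log θ with hFdef
      have hFd : ∀ x : ℝ, 0 < x → HasDerivAt F (g' x + L / 2 * x⁻¹) x := fun x hx =>
        (hderiv1 x hx).add ((Real.hasDerivAt_log (ne_of_gt hx)).const_mul (L / 2))
      have hFmono : MonotoneOn F (Ioo (0 : ℝ) δ) := by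
        apply monotoneOn_of_hasDerivWithinAt_nonneg (f' := fun θ => g' θ + L / 2 * θ⁻¹)
          (convex_Ioo 0 δ)
        · intro x hx
          exact (hFd x hx.1).continuousAt.continuousWithinAt
        · intro x hx
          rw [interior_Ioo] at hx ⊢
          exact (hFd x hx.1).hasDerivWithinAt
        · intro x hx
          rw [interior_Ioo] at hx
          have hxpos := hx.1
          have hxd : dist x 0 < δ := by
            rw [Real.dist_eq, sub_zero, abs_of_pos hxpos]; exact hx.2
          have h1 : -L / 2 < x * g' x := hδ hxd hxpos
          have h2 : 0 ≤ x * (g' x + L / 2 * x⁻¹) := by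
            rw [mul_add, ← mul_assoc, mul_comm x (L / 2), mul_assoc,
              mul_inv_cancel₀ (ne_of_gt hxpos)]
            linarith
          have h3 := div_nonneg h2 hxpos.le
          rwa [mul_div_cancel_left₀ _ (ne_of_gt hxpos)] at h3
      -- F tends to +∞ at 0⁺, contradicting F a ≤ F (δ/2)
      have hFtop : Tendsto F (𝓝[>] (0 : ℝ)) atTop := by
        apply Filter.Tendsto.add_atTop hglim
        exact (tendsto_const_mul_atTop_of_neg (by linarith : L / 2 < 0)).2
          Real.tendsto_log_nhdsGT_zero
      have hb2 : (δ / 2 : ℝ) ∈ Ioo (0 : ℝ) δ := ⟨by linarith, by linarith⟩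
      have hub : ∀ᶠ a in 𝓝[>] (0 : ℝ), F a ≤ F (δ / 2) := by
        filter_upwards [Ioo_mem_nhdsGT_of_mem ⟨le_refl 0, hb2.1⟩] with a ha
        exact hFmono ⟨ha.1, ha.2.trans hb2.2⟩ hb2 ha.2.le
      have := (hFtop.eventually (eventually_gt_atTop (F (δ / 2)))).and hub
      obtain ⟨a, h1, h2⟩ := this.exists
      linarith
    · -- L > 0 : θ g'(θ) → -L < 0, so eventually θ g'(θ) < -L/2
      have hev : ∀ᶠ θ in 𝓝[>] (0 : ℝ), θ * g' θ < -L / 2 := by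
        apply hg'lim.eventually (eventually_lt_nhds (by linarith))
      rw [eventually_nhdsWithin_iff] at hev
      obtain ⟨δ, hδpos, hδ⟩ := Metric.eventually_nhds_iff.1 hev
      set F : ℝ → ℝ := fun θ => g θ + L / 2 * Real.log θ with hFdef
      have hFd : ∀ x : ℝ, 0 < x → HasDerivAt F (g' x + L / 2 * x⁻¹) x := fun x hx =>
        (hderiv1 x hx).add ((Real.hasDerivAt_log (ne_of_gt hx)).const_mul (L / 2))
      have hFanti : AntitoneOn F (Ioo (0 : ℝ) δ) := by
        apply antitoneOn_of_hasDerivWithinAt_nonpos (f' := fun θ => g' θ + L / 2 * θ⁻¹)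
          (convex_Ioo 0 δ)
        · intro x hx
          exact (hFd x hx.1).continuousAt.continuousWithinAt
        · intro x hx
          rw [interior_Ioo] at hx ⊢
          exact (hFd x hx.1).hasDerivWithinAt
        · intro x hx
          rw [interior_Ioo] at hx
          have hxpos := hx.1
          have hxd : dist x 0 < δ := by
            rw [Real.dist_eq, sub_zero, abs_of_pos hxpos]; exact hx.2
          have h1 : x * g' x < -L / 2 := hδ hxd hxpos
          have h2 : x * (g' x + L / 2 * x⁻¹) ≤ 0 := by
            rw [mul_add, ← mul_assoc, mul_comm x (L / 2), mul_assoc,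
              mul_inv_cancel₀ (ne_of_gt hxpos)]
            linarith
          have h3 := div_nonpos_of_nonpos_of_nonneg h2 hxpos.le
          rwa [mul_div_cancel_left₀ _ (ne_of_gt hxpos)] at h3
      have hFbot : Tendsto F (𝓝[>] (0 : ℝ)) atBot := by
        apply Filter.Tendsto.add_atBot hglim
        exact (tendsto_const_mul_atBot_of_pos (by linarith : 0 < L / 2)).2
          Real.tendsto_log_nhdsGT_zero
      have hb2 : (δ / 2 : ℝ) ∈ Ioo (0 : ℝ) δ := ⟨by linarith, by linarith⟩
      have hlb : ∀ᶠ a in 𝓝[>] (0 : ℝ), F (δ / 2) ≤ F a := by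
        filter_upwards [Ioo_mem_nhdsGT_of_mem ⟨le_refl 0, hb2.1⟩] with a ha
        exact hFanti ⟨ha.1, ha.2.trans hb2.2⟩ hb2 ha.2.le
      have := (hFbot.eventually (eventually_lt_atBot (F (δ / 2)))).and hlb
      obtain ⟨a, h1, h2⟩ := this.exists
      linarith
  rw [hL0] at hlimH hg'lim
  rw [sub_zero] at hg'lim
  refine ⟨hg'lim, fun θ => if 0 < θ then g θ - θ * g' θ else 0, fun θ hθ => if_pos hθ,
    if_neg (by norm_num), ?_, ?_⟩
  · -- continuity within Ici at 0
    set h : ℝ → ℝ := fun θ => if 0 < θ then g θ - θ * g' θ else 0 with hhdef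
    have hh0 : h 0 = 0 := if_neg (by norm_num)
    unfold ContinuousWithinAt
    rw [hh0]
    have hIci : Ici (0 : ℝ) = {0} ∪ Ioi 0 := by
      ext x; simp [le_iff_lt_or_eq, or_comm, eq_comm]
    rw [hIci, nhdsWithin_union, nhdsWithin_singleton, tendsto_sup]
    constructor
    · have := tendsto_pure_nhds h 0
      rwa [hh0] at this
    · refine hlimH.congr' ?_
      filter_upwards [self_mem_nhdsWithin] with a (ha : 0 < a)
      simp [hhdef, if_pos ha, hHdef]
  · -- the bounds
    intro θ hθ
    rcases eq_or_lt_of_le hθ with rfl | hθpos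
    · simp
    simp only [if_pos hθpos]
    show c₀ * θ ≤ H θ ∧ H θ ≤ C₀ * θ
    have htend1 : Tendsto (fun a => c₀ * (θ - a)) (𝓝[>] (0 : ℝ)) (𝓝 (c₀ * θ)) := by
      have : Tendsto (fun a : ℝ => a) (𝓝[>] (0 : ℝ)) (𝓝 0) :=
        tendsto_id.mono_left nhdsWithin_le_nhds
      have hsub : Tendsto (fun a : ℝ => θ - a) (𝓝[>] (0 : ℝ)) (𝓝 (θ - 0)) :=
        tendsto_const_nhds.sub this
      have := hsub.const_mul c₀
      simpa using this
    have htend2 : Tendsto (fun a => H θ - H a) (𝓝[>] (0 : ℝ)) (𝓝 (H θ)) := by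
      have h2 : Tendsto (fun a : ℝ => H θ - H a) (𝓝[>] (0 : ℝ)) (𝓝 (H θ - 0)) :=
        (tendsto_const_nhds (α := ℝ)).sub hlimH
      simpa using h2
    have htend3 : Tendsto (fun a => C₀ * (θ - a)) (𝓝[>] (0 : ℝ)) (𝓝 (C₀ * θ)) := by
      have : Tendsto (fun a : ℝ => a) (𝓝[>] (0 : ℝ)) (𝓝 0) :=
        tendsto_id.mono_left nhdsWithin_le_nhds
      have hsub : Tendsto (fun a : ℝ => θ - a) (𝓝[>] (0 : ℝ)) (𝓝 (θ - 0)) :=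
        tendsto_const_nhds.sub this
      have := hsub.const_mul C₀
      simpa using this
    have hev : ∀ᶠ a in 𝓝[>] (0 : ℝ),
        c₀ * (θ - a) ≤ H θ - H a ∧ H θ - H a ≤ C₀ * (θ - a) := by
      filter_upwards [Ioo_mem_nhdsGT_of_mem ⟨le_refl 0, hθpos⟩] with a ha
      exact key a θ ha.1 ha.2.le
    constructor
    · exact le_of_tendsto_of_tendsto htend1 htend2 (hev.mono fun a h => h.1)
    · exact le_of_tendsto_of_tendsto htend2 htend3 (hev.mono fun a h => h.2)
end

section
/- Let E be a finite-dimensional real inner product space and (X, 𝒜, μ) a measure space, and let c₀, C₀ > 0. For each k ∈ ℕ let A_k : X → (continuous linear endomorphisms of E) and A : X → (continuous linear endomorphisms of E) be strongly measurable, and assume that for μ-a.e. x ∈ X: A_k(x) and A(x) are self-adjoint, ⟨A_k(x)v, v⟩ ≥ c₀‖v‖² and ‖A_k(x)v‖ ≤ C₀‖v‖ for all v ∈ E (and likewise for A(x)), and A_k(x) → A(x) as k → ∞. Let f_k, f ∈ L²(μ; E) with sup_k ‖f_k‖_{L²(μ;E)} < ∞, suppose f_k converges to f weakly in L²(μ;E)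 in the sense that ∫_X ⟨f_k, g⟩ dμ → ∫_X ⟨f, g⟩ dμ for every g ∈ L²(μ;E), and suppose ∫_X ⟨A_k f_k, f_k⟩ dμ → ∫_X ⟨A f, f⟩ dμ. Then ∫_X ‖f_k − f‖² dμ → 0, i.e. f_k → f strongly in L²(μ;E). -/
open MeasureTheory Filter Topology
open scoped RealInnerProductSpace ENNReal

section Aux

variable {E : Type*} [NormedAddCommGroup E] [InnerProductSpace ℝ E]
  {X : Type*} [MeasurableSpace X] {μ : Measure X}

lemma aesm_apply' {B : X → E →L[ℝ] E} {u : X → E}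
    (hB : StronglyMeasurable B) (hu : AEStronglyMeasurable u μ) :
    AEStronglyMeasurable (fun x => B x (u x)) μ :=
  isBoundedBilinearMap_apply.continuous.comp_aestronglyMeasurable₂
    hB.aestronglyMeasurable hu

lemma integrable_inner_of_memLp2 {u v : X → E} (hu : MemLp u 2 μ) (hv : MemLp v 2 μ) :
    Integrable (fun x => ⟪u x, v x⟫) μ := by
  have h := L2.integrable_inner (𝕜 := ℝ) (hu.toLp u) (hv.toLp v)
  refine h.congr ?_
  filter_upwards [hu.coeFn_toLp, hv.coeFn_toLp] with x h1 h2
  rw [h1, h2]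

lemma integrable_norm_mul_of_memLp2 {u v : X → E} (hu : MemLp u 2 μ) (hv : MemLp v 2 μ) :
    Integrable (fun x => ‖u x‖ * ‖v x‖) μ := by
  have h := integrable_inner_of_memLp2 (E := ℝ) hu.norm hv.norm
  simpa [RCLike.inner_apply, mul_comm] using h

lemma integrable_inner_apply' {B : X → E →L[ℝ] E} {u v : X → E} {C₀ : ℝ}
    (hB : StronglyMeasurable B) (hu : MemLp u 2 μ) (hv : MemLp v 2 μ)
    (hbound : ∀ᵐ x ∂μ, ∀ w : E, ‖B x w‖ ≤ C₀ * ‖w‖) :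
    Integrable (fun x => ⟪B x (u x), v x⟫) μ := by
  refine Integrable.mono' ((integrable_norm_mul_of_memLp2 hu hv).const_mul C₀) ?_ ?_
  · exact (aesm_apply' hB hu.aestronglyMeasurable).inner hv.aestronglyMeasurable
  · filter_upwards [hbound] with x hx
    calc ‖⟪B x (u x), v x⟫‖ ≤ ‖B x (u x)‖ * ‖v x‖ := norm_inner_le_norm _ _
      _ ≤ C₀ * ‖u x‖ * ‖v x‖ :=
        mul_le_mul_of_nonneg_right (hx _) (norm_nonneg _)
      _ = C₀ * (‖u x‖ * ‖v x‖) := mul_assoc _ _ _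

end Aux

/-- Weak convergence plus convergence of the dissipation upgrades to strong `L²`
convergence, for uniformly elliptic, uniformly bounded, self-adjoint, pointwise
convergent coefficients. -/
theorem strong_L2_convergence_from_dissipation
    {E : Type*} [NormedAddCommGroup E] [InnerProductSpace ℝ E] [FiniteDimensional ℝ E]
    {X : Type*} [MeasurableSpace X] (μ : Measure X)
    (c₀ C₀ : ℝ) (hc₀ : 0 < c₀) (hC₀ : 0 < C₀)
    (A : ℕ → X → E →L[ℝ] E) (Alim : X → E →L[ℝ] E)
    (hAmeas : ∀ k, StronglyMeasurable (A k)) (hAlimmeas : StronglyMeasurable Alim)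
    (hae : ∀ᵐ x ∂μ,
      (∀ k, (∀ v w : E, ⟪A k x v, w⟫ = ⟪v, A k x w⟫) ∧
            (∀ v : E, c₀ * ‖v‖ ^ 2 ≤ ⟪A k x v, v⟫) ∧
            (∀ v : E, ‖A k x v‖ ≤ C₀ * ‖v‖)) ∧
      ((∀ v w : E, ⟪Alim x v, w⟫ = ⟪v, Alim x w⟫) ∧
        (∀ v : E, c₀ * ‖v‖ ^ 2 ≤ ⟪Alim x v, v⟫) ∧
        (∀ v : E, ‖Alim x v‖ ≤ C₀ * ‖v‖)) ∧
      Tendsto (fun k => A k x) atTop (𝓝 (Alim x)))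
    (f : ℕ → X → E) (flim : X → E)
    (hf : ∀ k, MemLp (f k) 2 μ) (hflim : MemLp flim 2 μ)
    (hbdd : ∃ M : ℝ≥0∞, M < ⊤ ∧ ∀ k, eLpNorm (f k) 2 μ ≤ M)
    (hweak : ∀ g : X → E, MemLp g 2 μ →
      Tendsto (fun k => ∫ x, ⟪f k x, g x⟫ ∂μ) atTop (𝓝 (∫ x, ⟪flim x, g x⟫ ∂μ)))
    (hdiss : Tendsto (fun k => ∫ x, ⟪A k x (f k x), f k x⟫ ∂μ) atTop
      (𝓝 (∫ x, ⟪Alim x (flim x), flim x⟫ ∂μ))) :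
    Tendsto (fun k => ∫ x, ‖f k x - flim x‖ ^ 2 ∂μ) atTop (𝓝 0) := by
  classical
  obtain ⟨M, hMlt, hM⟩ := hbdd
  set L : ℝ := ∫ x, ⟪Alim x (flim x), flim x⟫ ∂μ with hLdef
  -- a.e. bound hypotheses in convenient form
  have haeAk : ∀ k, ∀ᵐ x ∂μ, ∀ w : E, ‖A k x w‖ ≤ C₀ * ‖w‖ := by
    intro k
    filter_upwards [hae] with x hx
    exact (hx.1 k).2.2
  have haeAlim : ∀ᵐ x ∂μ, ∀ w : E, ‖Alim x w‖ ≤ C₀ * ‖w‖ := by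
    filter_upwards [hae] with x hx
    exact hx.2.1.2.2
  -- Memℒp facts
  have hAlf2 : MemLp (fun x => Alim x (flim x)) 2 μ := by
    refine MemLp.of_le_mul (c := C₀) hflim
      (aesm_apply' hAlimmeas hflim.aestronglyMeasurable) ?_
    filter_upwards [haeAlim] with x hx using hx _
  have hgk : ∀ k, MemLp (fun x => A k x (flim x) - Alim x (flim x)) 2 μ := by
    intro k
    refine MemLp.of_le_mul (c := 2 * C₀) hflim
      (((aesm_apply' (hAmeas k) hflim.aestronglyMeasurable).sub
        (aesm_apply' hAlimmeas hflim.aestronglyMeasurable))) ?_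
    filter_upwards [haeAk k, haeAlim] with x h1 h2
    calc ‖A k x (flim x) - Alim x (flim x)‖
        ≤ ‖A k x (flim x)‖ + ‖Alim x (flim x)‖ := norm_sub_le _ _
      _ ≤ C₀ * ‖flim x‖ + C₀ * ‖flim x‖ := add_le_add (h1 _) (h2 _)
      _ = 2 * C₀ * ‖flim x‖ := by ring
  -- Integrability facts
  have hflsq : Integrable (fun x => ‖flim x‖ ^ 2) μ := by
    have h := integrable_inner_of_memLp2 hflim hflim
    refine h.congr (Eventually.of_forall fun x => ?_)
    dsimp only
    rw [real_inner_self_eq_norm_sq]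
  have hIa : ∀ k, Integrable (fun x => ⟪A k x (f k x), f k x⟫) μ := fun k =>
    integrable_inner_apply' (hAmeas k) (hf k) (hf k) (haeAk k)
  have hIb : ∀ k, Integrable (fun x => ⟪A k x (flim x), f k x⟫) μ := fun k =>
    integrable_inner_apply' (hAmeas k) hflim (hf k) (haeAk k)
  have hIc : ∀ k, Integrable (fun x => ⟪A k x (flim x), flim x⟫) μ := fun k =>
    integrable_inner_apply' (hAmeas k) hflim hflim (haeAk k)
  -- the three sequences of integrals
  set a : ℕ → ℝ := fun k => ∫ x, ⟪A k x (f k x), f k x⟫ ∂μ with hadef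
  set b : ℕ → ℝ := fun k => ∫ x, ⟪A k x (flim x), f k x⟫ ∂μ with hbdef
  set c : ℕ → ℝ := fun k => ∫ x, ⟪A k x (flim x), flim x⟫ ∂μ with hcdef
  -- limit of a
  have ha : Tendsto a atTop (𝓝 L) := hdiss
  -- limit of c by dominated convergence
  have hc : Tendsto c atTop (𝓝 L) := by
    refine tendsto_integral_of_dominated_convergence (fun x => C₀ * ‖flim x‖ ^ 2)
      (fun k => (hIc k).1) (hflsq.const_mul C₀) ?_ ?_
    · intro k
      filter_upwards [haeAk k] with x hx
      calc ‖⟪A k x (flim x), flim x⟫‖ ≤ ‖A k x (flim x)‖ * ‖flim x‖ :=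
            norm_inner_le_norm _ _
        _ ≤ C₀ * ‖flim x‖ * ‖flim x‖ :=
            mul_le_mul_of_nonneg_right (hx _) (norm_nonneg _)
        _ = C₀ * ‖flim x‖ ^ 2 := by ring
    · filter_upwards [hae] with x hx
      have happ : Tendsto (fun k => A k x (flim x)) atTop (𝓝 (Alim x (flim x))) := by
        have hc2 : Continuous fun T : E →L[ℝ] E => T (flim x) :=
          isBoundedBilinearMap_apply.continuous.comp (continuous_id.prodMk continuous_const)
        exact (hc2.tendsto _).comp hx.2.2
      exact happ.inner tendsto_const_nhds
  -- weak limit of the mixed term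
  have hb : Tendsto b atTop (𝓝 L) := by
    -- split b k = ∫ ⟪f k, gk⟫ + ∫ ⟪f k, Alim flim⟫
    have hsplit : ∀ k, b k =
        (∫ x, ⟪f k x, A k x (flim x) - Alim x (flim x)⟫ ∂μ)
          + ∫ x, ⟪f k x, Alim x (flim x)⟫ ∂μ := by
      intro k
      rw [← integral_add (integrable_inner_of_memLp2 (hf k) (hgk k))
        (integrable_inner_of_memLp2 (hf k) hAlf2)]
      refine integral_congr_ae (Eventually.of_forall fun x => ?_)
      dsimp only
      rw [← inner_add_right, sub_add_cancel, real_inner_comm]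
    -- first part tends to zero
    have h1 : Tendsto (fun k => ∫ x, ⟪f k x, A k x (flim x) - Alim x (flim x)⟫ ∂μ)
        atTop (𝓝 0) := by
      -- L² Cauchy-Schwarz
      set G : ℕ → Lp E 2 μ := fun k => (hgk k).toLp _ with hGdef
      set F : ℕ → Lp E 2 μ := fun k => (hf k).toLp _ with hFdef
      have hGsq : Tendsto (fun k => ∫ x, ‖A k x (flim x) - Alim x (flim x)‖ ^ 2 ∂μ)
          atTop (𝓝 0) := by
        have h0 : (0 : ℝ) = ∫ _ : X, (0 : ℝ) ∂μ := by simp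
        rw [h0]
        refine tendsto_integral_of_dominated_convergence
          (fun x => (2 * C₀ * ‖flim x‖) ^ 2)
          (fun k => ((hgk k).aestronglyMeasurable.norm.pow 2))
          ?_ ?_ ?_
        · have : Integrable (fun x => (2 * C₀) ^ 2 * ‖flim x‖ ^ 2) μ :=
            hflsq.const_mul _
          refine this.congr (Eventually.of_forall fun x => ?_)
          ring
        · intro k
          filter_upwards [haeAk k, haeAlim] with x h1 h2
          have hb : ‖A k x (flim x) - Alim x (flim x)‖ ≤ 2 * C₀ * ‖flim x‖ := by
            calc ‖A k x (flim x) - Alim x (flim x)‖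
                ≤ ‖A k x (flim x)‖ + ‖Alim x (flim x)‖ := norm_sub_le _ _
              _ ≤ C₀ * ‖flim x‖ + C₀ * ‖flim x‖ := add_le_add (h1 _) (h2 _)
              _ = 2 * C₀ * ‖flim x‖ := by ring
          have hnn : (0:ℝ) ≤ ‖A k x (flim x) - Alim x (flim x)‖ ^ 2 := sq_nonneg _
          rw [Real.norm_of_nonneg hnn]
          exact pow_le_pow_left₀ (norm_nonneg _) hb 2
        · filter_upwards [hae] with x hx
          have happ : Tendsto (fun k => A k x (flim x)) atTop (𝓝 (Alim x (flim x))) := by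
            have hc2 : Continuous fun T : E →L[ℝ] E => T (flim x) :=
              isBoundedBilinearMap_apply.continuous.comp
                (continuous_id.prodMk continuous_const)
            exact (hc2.tendsto _).comp hx.2.2
          have : Tendsto (fun k => A k x (flim x) - Alim x (flim x)) atTop (𝓝 0) := by
            have h' := happ.sub (tendsto_const_nhds (x := Alim x (flim x)))
            simpa using h'
          simpa using (this.norm.pow 2)
      have hGnormsq : ∀ k, ‖G k‖ ^ 2 = ∫ x, ‖A k x (flim x) - Alim x (flim x)‖ ^ 2 ∂μ := by
        intro k
        rw [← real_inner_self_eq_norm_sq, L2.inner_def]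
        refine integral_congr_ae ?_
        filter_upwards [(hgk k).coeFn_toLp] with x hx
        rw [hx, real_inner_self_eq_norm_sq]
      have hGnorm : Tendsto (fun k => ‖G k‖) atTop (𝓝 0) := by
        have hsq : Tendsto (fun k => ‖G k‖ ^ 2) atTop (𝓝 0) := by
          simpa [hGnormsq] using hGsq
        have := (Real.continuous_sqrt.tendsto 0).comp hsq
        simpa [Real.sqrt_sq (norm_nonneg _), Function.comp_def, Real.sqrt_zero] using this
      have hFb : ∀ k, ‖F k‖ ≤ M.toReal := by
        intro k
        rw [hFdef]
        rw [Lp.norm_toLp]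
        exact ENNReal.toReal_mono hMlt.ne (hM k)
      refine squeeze_zero_norm (fun k => ?_) (by simpa using hGnorm.const_mul M.toReal)
      have heq : (∫ x, ⟪f k x, A k x (flim x) - Alim x (flim x)⟫ ∂μ) = ⟪F k, G k⟫ := by
        rw [L2.inner_def]
        refine integral_congr_ae ?_
        filter_upwards [(hf k).coeFn_toLp, (hgk k).coeFn_toLp] with x h1 h2
        rw [h1, h2]
      rw [heq, Real.norm_eq_abs]
      calc |⟪F k, G k⟫| ≤ ‖F k‖ * ‖G k‖ := abs_real_inner_le_norm _ _
        _ ≤ M.toReal * ‖G k‖ :=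
          mul_le_mul_of_nonneg_right (hFb k) (norm_nonneg _)
    -- second part tends to L by weak convergence
    have h2 : Tendsto (fun k => ∫ x, ⟪f k x, Alim x (flim x)⟫ ∂μ) atTop (𝓝 L) := by
      have := hweak (fun x => Alim x (flim x)) hAlf2
      have heq : (∫ x, ⟪flim x, Alim x (flim x)⟫ ∂μ) = L := by
        rw [hLdef]
        exact integral_congr_ae (Eventually.of_forall fun x => real_inner_comm _ _)
      rwa [heq] at this
    have := h1.add h2
    rw [zero_add] at this
    refine Tendsto.congr (fun k => (hsplit k).symm) this
  -- the key inequality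
  have hdiff2 : ∀ k, Integrable (fun x => ‖f k x - flim x‖ ^ 2) μ := by
    intro k
    have h := integrable_inner_of_memLp2 ((hf k).sub hflim) ((hf k).sub hflim)
    refine h.congr (Eventually.of_forall fun x => ?_)
    simp only [Pi.sub_apply]
    rw [real_inner_self_eq_norm_sq]
  have hkey : ∀ k, c₀ * (∫ x, ‖f k x - flim x‖ ^ 2 ∂μ) ≤ a k - 2 * b k + c k := by
    intro k
    have hle : ∀ᵐ x ∂μ, c₀ * ‖f k x - flim x‖ ^ 2 ≤
        ⟪A k x (f k x), f k x⟫ - 2 * ⟪A k x (flim x), f k x⟫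
          + ⟪A k x (flim x), flim x⟫ := by
      filter_upwards [hae] with x hx
      obtain ⟨hsa, hell, _⟩ := hx.1 k
      have hexp : ⟪A k x (f k x - flim x), f k x - flim x⟫ =
          ⟪A k x (f k x), f k x⟫ - 2 * ⟪A k x (flim x), f k x⟫
            + ⟪A k x (flim x), flim x⟫ := by
        have hcross : ⟪A k x (f k x), flim x⟫ = ⟪A k x (flim x), f k x⟫ := by
          rw [hsa, real_inner_comm]
        rw [map_sub, inner_sub_left, inner_sub_right, inner_sub_right, hcross]
        ring
      rw [← hexp]
      exact hell _
    have hint : Integrable (fun x =>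
        ⟪A k x (f k x), f k x⟫ - 2 * ⟪A k x (flim x), f k x⟫
          + ⟪A k x (flim x), flim x⟫) μ :=
      ((hIa k).sub ((hIb k).const_mul 2)).add (hIc k)
    calc c₀ * (∫ x, ‖f k x - flim x‖ ^ 2 ∂μ)
        = ∫ x, c₀ * ‖f k x - flim x‖ ^ 2 ∂μ := (integral_const_mul _ _).symm
      _ ≤ ∫ x, (⟪A k x (f k x), f k x⟫ - 2 * ⟪A k x (flim x), f k x⟫
            + ⟪A k x (flim x), flim x⟫) ∂μ :=
          integral_mono_ae ((hdiff2 k).const_mul c₀) hint hle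
      _ = a k - 2 * b k + c k := by
          have hI12 : Integrable (fun x =>
              ⟪A k x (f k x), f k x⟫ - 2 * ⟪A k x (flim x), f k x⟫) μ :=
            (hIa k).sub ((hIb k).const_mul 2)
          rw [integral_add hI12 (hIc k),
            integral_sub (hIa k) ((hIb k).const_mul 2), integral_const_mul]
  -- squeeze
  have hlim : Tendsto (fun k => (a k - 2 * b k + c k) / c₀) atTop (𝓝 0) := by
    have : Tendsto (fun k => a k - 2 * b k + c k) atTop (𝓝 (L - 2 * L + L)) :=
      (ha.sub ((hb.const_mul 2))).add hc
    have h0 : L - 2 * L + L = 0 := by ring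
    rw [h0] at this
    simpa using this.div_const c₀
  refine tendsto_of_tendsto_of_tendsto_of_le_of_le tendsto_const_nhds hlim
    (fun k => integral_nonneg fun x => sq_nonneg _) (fun k => ?_)
  rw [le_div_iff₀ hc₀, mul_comm]
  exact hkey k
end
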